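/- arXiv:2601.05028 — 2 statements merged into one kernel-verified Lean document; each statement's English description precedes it below -/
import Mathlib

section
/- Let G be a compact group with normalized Haar measure λ, and let π, π' be continuous finite-dimensional unitary representations of G on V, V'. Let T : V → V' be continuous, with G-smoothing P(T)(v) = ∫_G π'(g)* T(π(g) v) dλ(g) and defect Δ_g(T) = π'(g) ∘ T − T ∘ π(g). If there is K ≥ 0 such that for every g ∈ G the map Δ_g(T) is Lipschitz with constant K, then T − P(T) is Lipschitz with constant K. (Lower half of Lemma 3.2: ‖T − P(T)‖ ≤ sup_g ‖Δ_g(T)‖ in Lipschitz seminorm.) -/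
open MeasureTheory
open scoped NNReal

lemma unitary_apply_norm_le {V' : Type*} [NormedAddCommGroup V'] [InnerProductSpace ℂ V']
    [FiniteDimensional ℂ V'] (u : V' →L[ℂ] V') (hu : u ∈ unitary (V' →L[ℂ] V')) (x : V') :
    ‖u x‖ ≤ ‖x‖ := by
  have h1 : ‖star u * u‖ = ‖u‖ * ‖u‖ := CStarRing.norm_star_mul_self
  have h2 : star u * u = 1 := (Unitary.mem_iff.mp hu).1
  have h3 : ‖(1 : V' →L[ℂ] V')‖ ≤ 1 := ContinuousLinearMap.norm_id_le
  have hu1 : ‖u‖ ≤ 1 := by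
    nlinarith [norm_nonneg u, h1, h2 ▸ h1]
  calc ‖u x‖ ≤ ‖u‖ * ‖x‖ := u.le_opNorm x
    _ ≤ 1 * ‖x‖ := by gcongr
    _ = ‖x‖ := one_mul _

/-- lower half of Lemma 3.2.  Let `T : V → V'` be continuous, with
`G`-smoothing `P(T) v = ∫ g, π'(g)* (T (π g v)) dμ(g)` and defect
`Δ_g(T) = π'(g) ∘ T − T ∘ π(g)`.  If every `Δ_g(T)` is `K`-Lipschitz, then `T − P(T)` is
`K`-Lipschitz. -/
theorem defect_controls_projection
    {G : Type*} [Group G] [TopologicalSpace G] [IsTopologicalGroup G]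
    [CompactSpace G] [MeasurableSpace G] [BorelSpace G]
    (μ : Measure G) [μ.IsHaarMeasure] [IsProbabilityMeasure μ]
    {V V' : Type*}
    [NormedAddCommGroup V] [InnerProductSpace ℂ V] [FiniteDimensional ℂ V]
    [NormedAddCommGroup V'] [InnerProductSpace ℂ V'] [FiniteDimensional ℂ V']
    (π : G →* (V →L[ℂ] V)) (π' : G →* (V' →L[ℂ] V'))
    (hπc : Continuous fun g => π g) (hπ'c : Continuous fun g => π' g)
    (hπu : ∀ g, π g ∈ unitary (V →L[ℂ] V))
    (hπ'u : ∀ g, π' g ∈ unitary (V' →L[ℂ] V'))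
    (T : V → V') (hT : Continuous T)
    (K : ℝ≥0)
    (hK : ∀ g : G, LipschitzWith K fun v => π' g (T v) - T (π g v)) :
    LipschitzWith K fun v => T v - ∫ g, star (π' g) (T (π g v)) ∂μ := by
  have hcont : ∀ v : V, Continuous fun g : G => star (π' g) (T (π g v)) :=
    fun v => (continuous_star.comp hπ'c).clm_apply (hT.comp (hπc.clm_apply continuous_const))
  have hint : ∀ v : V, Integrable (fun g : G => star (π' g) (T (π g v))) μ :=
    fun v => integrableOn_univ.mp (((hcont v).continuousOn).integrableOn_compact' isCompact_univ MeasurableSet.univ)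
  apply LipschitzWith.of_dist_le_mul
  intro v w
  rw [dist_eq_norm, dist_eq_norm]
  have key : ∀ g : G,
      star (π' g) ((π' g (T v) - T (π g v)) - (π' g (T w) - T (π g w)))
        = (T v - star (π' g) (T (π g v))) - (T w - star (π' g) (T (π g w))) := by
    intro g
    have h2 : star (π' g) * π' g = 1 := (Unitary.mem_iff.mp (hπ'u g)).1
    have h3 : ∀ x : V', star (π' g) (π' g x) = x := by
      intro x
      have := congrArg (fun u : V' →L[ℂ] V' => u x) h2
      simpa [ContinuousLinearMap.mul_apply] using this
    simp [map_sub, h3]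
  have heq : (T v - ∫ g, star (π' g) (T (π g v)) ∂μ)
      - (T w - ∫ g, star (π' g) (T (π g w)) ∂μ)
      = ∫ g, star (π' g) ((π' g (T v) - T (π g v)) - (π' g (T w) - T (π g w))) ∂μ := by
    have h1 : ∫ g, star (π' g) ((π' g (T v) - T (π g v)) - (π' g (T w) - T (π g w))) ∂μ
        = ∫ g, ((T v - star (π' g) (T (π g v))) - (T w - star (π' g) (T (π g w)))) ∂μ := by
      exact integral_congr_ae (Filter.Eventually.of_forall key)
    have hiv : Integrable (fun g : G => T v - star (π' g) (T (π g v))) μ :=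
      (integrable_const (T v)).sub (hint v)
    have hiw : Integrable (fun g : G => T w - star (π' g) (T (π g w))) μ :=
      (integrable_const (T w)).sub (hint w)
    rw [h1, integral_sub hiv hiw, integral_sub (integrable_const (T v)) (hint v),
      integral_sub (integrable_const (T w)) (hint w), integral_const, integral_const]
    simp
  rw [heq]
  have hbound : ∀ g : G,
      ‖star (π' g) ((π' g (T v) - T (π g v)) - (π' g (T w) - T (π g w)))‖ ≤ K * ‖v - w‖ := by
    intro g
    have hu : star (π' g) ∈ unitary (V' →L[ℂ] V') := Unitary.star_mem (hπ'u g)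
    refine le_trans (unitary_apply_norm_le _ hu _) ?_
    have := (hK g).dist_le_mul v w
    simpa [dist_eq_norm] using this
  calc ‖∫ g, star (π' g) ((π' g (T v) - T (π g v)) - (π' g (T w) - T (π g w))) ∂μ‖
      ≤ (K * ‖v - w‖) * (μ Set.univ).toReal :=
        norm_integral_le_of_norm_le_const (Filter.Eventually.of_forall hbound)
    _ = K * ‖v - w‖ := by simp
end

section
/- Let G be a compact group with normalized Haar measure λ, and let π, π' be continuous finite-dimensional unitary representations of G on V, V'. Let T : V → V' be continuous, with G-smoothing P(T)(v) = ∫_G π'(g)* T(π(g) v) dλ(g) and defect Δ_g(T) = π'(g) ∘ T − T ∘ π(g). If T − P(T) is Lipschitz with constant K, then for every g ∈ G the map Δ_g(T) is Lipschitz with constant 2K. (Upper half of Lemma 3.2: sup_g ‖Δ_g(T)‖ ≤ 2 ‖T − P(T)‖ in Lipschitz seminorm.) -/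
open MeasureTheory
open scoped NNReal ENNReal

/-- A Haar probability measure on a compact group is right invariant. -/
lemma haar_prob_isMulRightInvariant
    {G : Type*} [Group G] [TopologicalSpace G] [IsTopologicalGroup G]
    [CompactSpace G] [MeasurableSpace G] [BorelSpace G]
    (μ : Measure G) [μ.IsHaarMeasure] [IsProbabilityMeasure μ] :
    μ.IsMulRightInvariant := by
  constructor
  intro g
  set μ' : Measure G := Measure.map (· * g) μ with hμ'
  have hmeas : Measurable (· * g : G → G) := measurable_mul_const g
  have h1 : IsProbabilityMeasure μ' := Measure.isProbabilityMeasure_map hmeas.aemeasurable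
  have h2 : μ'.IsMulLeftInvariant := by
    rw [hμ']
    infer_instance
  have h3 := Measure.isMulInvariant_eq_smul_of_compactSpace μ' μ
  have hu : (1 : ℝ≥0∞) = (Measure.haarScalarFactor μ' μ : ℝ≥0∞) * 1 := by
    conv_lhs => rw [← measure_univ (μ := μ'), h3]
    rw [Measure.smul_apply, measure_univ, ENNReal.smul_def, smul_eq_mul]
  rw [mul_one] at hu
  have hc : Measure.haarScalarFactor μ' μ = 1 := by
    exact_mod_cast hu.symm
  rw [h3, hc, one_smul]

/-- upper half of Lemma 3.2.  Let `T : V → V'` be continuous, with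
`G`-smoothing `P(T) v = ∫ g, π'(g)* (T (π g v)) dμ(g)` and defect
`Δ_g(T) = π'(g) ∘ T − T ∘ π(g)`.  If `T − P(T)` is `K`-Lipschitz, then every `Δ_g(T)` is
`2K`-Lipschitz. -/
theorem projection_controls_defect
    {G : Type*} [Group G] [TopologicalSpace G] [IsTopologicalGroup G]
    [CompactSpace G] [MeasurableSpace G] [BorelSpace G]
    (μ : Measure G) [μ.IsHaarMeasure] [IsProbabilityMeasure μ]
    {V V' : Type*}
    [NormedAddCommGroup V] [InnerProductSpace ℂ V] [FiniteDimensional ℂ V]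
    [NormedAddCommGroup V'] [InnerProductSpace ℂ V'] [FiniteDimensional ℂ V']
    (π : G →* (V →L[ℂ] V)) (π' : G →* (V' →L[ℂ] V'))
    (hπc : Continuous fun g => π g) (hπ'c : Continuous fun g => π' g)
    (hπu : ∀ g, π g ∈ unitary (V →L[ℂ] V))
    (hπ'u : ∀ g, π' g ∈ unitary (V' →L[ℂ] V'))
    (T : V → V') (hT : Continuous T)
    (K : ℝ≥0)
    (hK : LipschitzWith K fun v => T v - ∫ g, star (π' g) (T (π g v)) ∂μ)
    (g : G) :
    LipschitzWith (2 * K) fun v => π' g (T v) - T (π g v) := by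
  haveI hright : μ.IsMulRightInvariant := haar_prob_isMulRightInvariant μ
  -- abbreviations
  set P : V → V' := fun v => ∫ h, star (π' h) (T (π h v)) ∂μ with hP
  set S : V → V' := fun v => T v - P v with hS
  -- continuity/integrability of the integrand
  have hFcont : ∀ v : V, Continuous fun h : G => star (π' h) (T (π h v)) := by
    intro v
    exact (continuous_star.comp hπ'c).clm_apply (hT.comp (hπc.clm_apply continuous_const))
  have hFint : ∀ v : V, Integrable (fun h : G => star (π' h) (T (π h v))) μ := fun v =>
    (hFcont v).integrable_of_hasCompactSupport (HasCompactSupport.of_compactSpace _)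
  -- star of π' h⁻¹ is π' h
  have hstar : ∀ h : G, star (π' (h⁻¹)) = π' h := by
    intro h
    have h1 : star (π' h⁻¹) * π' h⁻¹ = 1 := Unitary.star_mul_self_of_mem (hπ'u h⁻¹)
    have h2 : π' h⁻¹ * π' h = 1 := by rw [← map_mul, inv_mul_cancel, map_one]
    exact left_inv_eq_right_inv h1 h2
  -- equivariance of P
  have hequiv : ∀ v : V, P (π g v) = π' g (P v) := by
    intro v
    have e1 : (fun h : G => star (π' h) (T (π h (π g v))))
        = fun h : G => (fun k : G => star (π' (k * g⁻¹)) (T (π k v))) (h * g) := by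
      funext h
      show star (π' h) (T (π h (π g v))) = star (π' (h * g * g⁻¹)) (T (π (h * g) v))
      rw [mul_inv_cancel_right, map_mul, ContinuousLinearMap.mul_apply]
    have e2 : (fun h : G => star (π' (h * g⁻¹)) (T (π h v)))
        = fun h : G => π' g (star (π' h) (T (π h v))) := by
      funext h
      rw [map_mul, star_mul, hstar g, ContinuousLinearMap.mul_apply]
    rw [hP]
    show (∫ h, star (π' h) (T (π h (π g v))) ∂μ) = π' g (∫ h, star (π' h) (T (π h v)) ∂μ)
    rw [e1, integral_mul_right_eq_self (fun k : G => star (π' (k * g⁻¹)) (T (π k v))) g,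
      e2]
    exact ContinuousLinearMap.integral_comp_comm (π' g) (hFint v)
  -- rewrite the defect in terms of S
  have hrw : (fun v => π' g (T v) - T (π g v)) = fun v => π' g (S v) - S (π g v) := by
    funext v
    simp only [hS, map_sub, hequiv v]
    abel
  rw [hrw]
  -- Lipschitz estimates
  have hπ'iso : LipschitzWith 1 fun x : V' => π' g x := by
    apply LipschitzWith.of_dist_le_mul
    intro x y
    rw [dist_eq_norm, ← map_sub, ContinuousLinearMap.norm_map_of_mem_unitary (hπ'u g),
      ← dist_eq_norm, NNReal.coe_one, one_mul]
  have hπiso : LipschitzWith 1 fun x : V => π g x := by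
    apply LipschitzWith.of_dist_le_mul
    intro x y
    rw [dist_eq_norm, ← map_sub, ContinuousLinearMap.norm_map_of_mem_unitary (hπu g),
      ← dist_eq_norm, NNReal.coe_one, one_mul]
  have h1 : LipschitzWith (1 * K) fun v => π' g (S v) := hπ'iso.comp hK
  have h2 : LipschitzWith (K * 1) fun v => S (π g v) := hK.comp hπiso
  have := h1.sub h2
  rw [one_mul, mul_one, ← two_mul] at this
  exact this
end
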